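/- (Kochen–Stone type Borel–Cantelli) Let (A_n) be a sequence of measurable subsets of a probability space with ∑ μ(A_n) = ∞. Then μ(limsup A_n) ≥ limsup_{n→∞} (∑_{k=1}^n μ(A_k))² / (∑_{k,h=1}^n μ(A_k ∩ A_h)). -/

import Mathlib

open MeasureTheory Filter
open scoped ENNReal


lemma key_cs {Ω : Type*} [MeasurableSpace Ω] (μ : Measure Ω)
    (A : ℕ → Set Ω) (hA : ∀ n, MeasurableSet (A n)) (s : Finset ℕ) :
    (∑ k ∈ s, μ (A k)) ^ 2 ≤
      (∑ k ∈ s, ∑ h ∈ s, μ (A k ∩ A h)) * μ (⋃ k ∈ s, A k) := by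
  set f : Ω → ℝ≥0∞ := fun ω => ∑ k ∈ s, (A k).indicator 1 ω with hf_def
  have hf : Measurable f := by
    apply Finset.measurable_sum
    intro k _
    exact (measurable_one.indicator (hA k))
  set U : Set Ω := ⋃ k ∈ s, A k with hU_def
  have hU : MeasurableSet U := MeasurableSet.biUnion s.countable_toSet (fun k _ => hA k)
  set g : Ω → ℝ≥0∞ := U.indicator 1 with hg_def
  have hg : Measurable g := measurable_one.indicator hU
  have h1 : ∫⁻ ω, f ω ∂μ = ∑ k ∈ s, μ (A k) := by
    show ∫⁻ ω, ∑ k ∈ s, (A k).indicator 1 ω ∂μ = _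
    rw [lintegral_finset_sum _ (fun k _ => measurable_one.indicator (hA k))]
    exact Finset.sum_congr rfl fun k _ => lintegral_indicator_one (hA k)
  have h2 : ∫⁻ ω, f ω ^ (2:ℝ) ∂μ = ∑ k ∈ s, ∑ h ∈ s, μ (A k ∩ A h) := by
    have heq : ∀ ω, f ω ^ (2:ℝ) = ∑ k ∈ s, ∑ h ∈ s, (A k ∩ A h).indicator 1 ω := by
      intro ω
      rw [ENNReal.rpow_two, sq, hf_def]
      simp only [Finset.sum_mul_sum]
      exact Finset.sum_congr rfl fun k _ => Finset.sum_congr rfl fun h _ => by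
        rw [Set.inter_indicator_one]; rfl
    simp_rw [heq]
    rw [lintegral_finset_sum _ (fun k _ => Finset.measurable_sum _
      (fun h _ => measurable_one.indicator ((hA k).inter (hA h))))]
    refine Finset.sum_congr rfl fun k _ => ?_
    rw [lintegral_finset_sum _ (fun h _ => measurable_one.indicator ((hA k).inter (hA h)))]
    exact Finset.sum_congr rfl fun h _ => lintegral_indicator_one ((hA k).inter (hA h))
  have hfg : ∀ ω, f ω = (f * g) ω := by
    intro ω
    by_cases hω : ω ∈ U
    · simp [hg_def, Set.indicator_of_mem hω]
    · have hz : f ω = 0 := by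
        apply Finset.sum_eq_zero
        intro k hk
        exact Set.indicator_of_notMem (fun h => hω (Set.mem_biUnion hk h)) _
      simp [hz]
  have hg2 : ∫⁻ ω, g ω ^ (2:ℝ) ∂μ = μ U := by
    have heq : ∀ ω, g ω ^ (2:ℝ) = U.indicator 1 ω := by
      intro ω
      by_cases hω : ω ∈ U <;> simp [hg_def, Set.indicator_of_mem, Set.indicator_of_notMem, hω,
        ENNReal.rpow_two]
    simp_rw [heq]
    exact lintegral_indicator_one hU
  have hconj : (2:ℝ).HolderConjugate 2 := Real.holderConjugate_iff.mpr ⟨one_lt_two, by norm_num⟩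
  have holder := ENNReal.lintegral_mul_le_Lp_mul_Lq μ hconj hf.aemeasurable hg.aemeasurable
  have key : (∫⁻ ω, f ω ∂μ) ^ 2 ≤ (∫⁻ ω, f ω ^ (2:ℝ) ∂μ) * (∫⁻ ω, g ω ^ (2:ℝ) ∂μ) := by
    have h' : ∫⁻ ω, f ω ∂μ ≤ (∫⁻ ω, f ω ^ (2:ℝ) ∂μ) ^ (1/2:ℝ) * (∫⁻ ω, g ω ^ (2:ℝ) ∂μ) ^ (1/2:ℝ) := by
      calc ∫⁻ ω, f ω ∂μ = ∫⁻ ω, (f * g) ω ∂μ := lintegral_congr hfg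
      _ ≤ _ := holder
    calc (∫⁻ ω, f ω ∂μ) ^ 2
        ≤ ((∫⁻ ω, f ω ^ (2:ℝ) ∂μ) ^ (1/2:ℝ) * (∫⁻ ω, g ω ^ (2:ℝ) ∂μ) ^ (1/2:ℝ)) ^ 2 :=
          pow_le_pow_left₀ (zero_le) h' 2
      _ = _ := by
          rw [mul_pow, ← ENNReal.rpow_natCast (_ ^ (1/2:ℝ)), ← ENNReal.rpow_natCast (_ ^ (1/2:ℝ)),
            ← ENNReal.rpow_mul, ← ENNReal.rpow_mul]
          norm_num
  rw [← h1, ← h2, ← hg2]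
  exact key


/-- (Kochen–Stone type Borel–Cantelli) Let `(A n)` be a sequence of measurable subsets of a
probability space with `∑ μ(A n) = ∞`.  Then
`μ (limsup A) ≥ limsup_n (∑_{k<n} μ(A k))² / (∑_{k,h<n} μ(A k ∩ A h))`. -/
theorem stmt4 {Ω : Type*} [MeasurableSpace Ω] (μ : Measure Ω) [IsProbabilityMeasure μ]
    (A : ℕ → Set Ω) (hA : ∀ n, MeasurableSet (A n))
    (hsum : (∑' n, μ (A n)) = ⊤) :
    limsup (fun n =>
        (∑ k ∈ Finset.range n, μ (A k)) ^ 2 /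
          (∑ k ∈ Finset.range n, ∑ h ∈ Finset.range n, μ (A k ∩ A h))) atTop
      ≤ μ (limsup A atTop) := by
  set a : ℕ → ℝ≥0∞ := fun n => ∑ k ∈ Finset.range n, μ (A k) with ha_def
  set b : ℕ → ℝ≥0∞ := fun n => ∑ k ∈ Finset.range n, ∑ h ∈ Finset.range n, μ (A k ∩ A h)
    with hb_def
  set c : ℕ → ℝ≥0∞ := fun m => μ (⋃ k ∈ Set.Ici m, A k) with hc_def
  have ha_top : Tendsto a atTop (nhds ⊤) := by
    rw [← hsum]; exact ENNReal.tendsto_nat_tsum _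
  have ha_fin : ∀ m, a m ≠ ⊤ := by
    intro m
    exact (ENNReal.sum_lt_top.2 fun k _ => measure_lt_top μ _).ne
  -- diagonal bound : a n ≤ b n
  have hab : ∀ n, a n ≤ b n := by
    intro n
    refine Finset.sum_le_sum fun k hk => ?_
    calc μ (A k) = μ (A k ∩ A k) := by rw [Set.inter_self]
    _ ≤ _ := Finset.single_le_sum (f := fun h => μ (A k ∩ A h)) (fun _ _ => zero_le) hk
  -- main estimate
  have main : ∀ m, ∀ n, m ≤ n →
      a n ^ 2 / b n ≤ c m + (a m ^ 2 / a n + 2 * a m / (a n - a m)) := by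
    intro m n hmn
    set d : ℝ≥0∞ := ∑ k ∈ Finset.Ico m n, μ (A k) with hd_def
    have hsplit : a n = a m + d := by
      rw [ha_def, hd_def]
      simp only [Finset.range_eq_Ico]
      exact (Finset.sum_Ico_consecutive _ (Nat.zero_le m) hmn).symm
    have hd_eq : d = a n - a m := by
      rw [hsplit, ENNReal.add_sub_cancel_left (ha_fin m)]
    have hIco_sub : (Finset.Ico m n) ⊆ Finset.range n := by
      rw [Finset.range_eq_Ico]; exact Finset.Ico_subset_Ico (Nat.zero_le m) le_rfl
    have he : (∑ k ∈ Finset.Ico m n, ∑ h ∈ Finset.Ico m n, μ (A k ∩ A h)) ≤ b n := by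
      calc (∑ k ∈ Finset.Ico m n, ∑ h ∈ Finset.Ico m n, μ (A k ∩ A h))
          ≤ ∑ k ∈ Finset.Ico m n, ∑ h ∈ Finset.range n, μ (A k ∩ A h) :=
            Finset.sum_le_sum fun k _ =>
              Finset.sum_le_sum_of_subset_of_nonneg hIco_sub (fun _ _ _ => zero_le)
        _ ≤ b n := Finset.sum_le_sum_of_subset_of_nonneg hIco_sub (fun _ _ _ => zero_le)
    have hUsub : (⋃ k ∈ Finset.Ico m n, A k) ⊆ ⋃ k ∈ Set.Ici m, A k := by
      refine Set.iUnion₂_subset fun k hk => ?_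
      exact Set.subset_biUnion_of_mem (Finset.mem_Ico.mp hk).1
    have hcs := key_cs μ A hA (Finset.Ico m n)
    have hd2 : d ^ 2 ≤ c m * b n := by
      calc d ^ 2 ≤ (∑ k ∈ Finset.Ico m n, ∑ h ∈ Finset.Ico m n, μ (A k ∩ A h)) *
            μ (⋃ k ∈ Finset.Ico m n, A k) := hcs
      _ ≤ b n * c m := mul_le_mul' he (measure_mono hUsub)
      _ = c m * b n := mul_comm _ _
    have hd2b : d ^ 2 ≤ b n := by
      calc d ^ 2 ≤ b n * c m := hd2.trans_eq (mul_comm _ _)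
      _ ≤ b n * 1 := mul_le_mul_right prob_le_one _
      _ = b n := mul_one _
    have hexp : a n ^ 2 = a m ^ 2 + 2 * a m * d + d ^ 2 := by
      rw [hsplit]; ring
    calc a n ^ 2 / b n = (a m ^ 2 + 2 * a m * d + d ^ 2) / b n := by rw [hexp]
      _ = a m ^ 2 / b n + 2 * a m * d / b n + d ^ 2 / b n := by
          rw [ENNReal.add_div, ENNReal.add_div]
      _ ≤ a m ^ 2 / a n + 2 * a m / (a n - a m) + c m := by
          gcongr ?_ + ?_ + ?_
          · exact ENNReal.div_le_div_left (hab n) _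
          · -- 2 * a m * d / b n ≤ 2 * a m / d, then d = a n - a m
            rw [← hd_eq]
            calc 2 * a m * d / b n ≤ 2 * a m * d / d ^ 2 :=
                ENNReal.div_le_div_left hd2b _
              _ = 2 * a m * (d / d ^ 2) := by rw [mul_div_assoc]
              _ ≤ 2 * a m * (1 / d) := by
                  refine mul_le_mul_right ?_ _
                  rw [pow_two]
                  rcases eq_or_ne d 0 with h0 | h0
                  · simp [h0]
                  rcases eq_or_ne d ⊤ with ht | ht
                  · simp [ht]
                  rw [div_eq_mul_inv, ENNReal.mul_inv (Or.inl h0) (Or.inl ht), ← mul_assoc,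
                    ENNReal.mul_inv_cancel h0 ht, one_mul, one_div]
              _ = 2 * a m / d := mul_one_div _ _
          · exact ENNReal.div_le_of_le_mul hd2
      _ = c m + (a m ^ 2 / a n + 2 * a m / (a n - a m)) := by ring
  -- per-m limsup bound
  have hLc : ∀ m, limsup (fun n => a n ^ 2 / b n) atTop ≤ c m := by
    intro m
    have hsub : Tendsto (fun n => a n - a m) atTop (nhds ⊤) := by
      rw [ENNReal.tendsto_nhds_top_iff_nat]
      intro N
      have hlt : (N : ℝ≥0∞) + a m < ⊤ :=
        ENNReal.add_lt_top.2 ⟨ENNReal.natCast_lt_top N, (ha_fin m).lt_top⟩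
      filter_upwards [ha_top.eventually (eventually_gt_nhds hlt)] with n hn
      exact (ENNReal.cancel_of_ne (ha_fin m)).lt_tsub_iff_right.2 hn
    have hg1 : Tendsto (fun n => a m ^ 2 / a n) atTop (nhds 0) := by
      have := ENNReal.Tendsto.const_div ha_top (Or.inr (ENNReal.pow_ne_top (ha_fin m))) (a := a m ^ 2)
      simpa [ENNReal.div_top] using this
    have hg2 : Tendsto (fun n => 2 * a m / (a n - a m)) atTop (nhds 0) := by
      have := ENNReal.Tendsto.const_div hsub (Or.inr (ENNReal.mul_ne_top (by simp) (ha_fin m))) (a := 2 * a m)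
      simpa [ENNReal.div_top] using this
    have htend : Tendsto (fun n => c m + (a m ^ 2 / a n + 2 * a m / (a n - a m)))
        atTop (nhds (c m)) := by
      have h0 : Tendsto (fun n => a m ^ 2 / a n + 2 * a m / (a n - a m)) atTop (nhds 0) := by
        simpa using hg1.add hg2
      simpa using (tendsto_const_nhds (x := c m) (f := atTop)).add h0
    calc limsup (fun n => a n ^ 2 / b n) atTop
        ≤ limsup (fun n => c m + (a m ^ 2 / a n + 2 * a m / (a n - a m))) atTop :=
          limsup_le_limsup (eventually_atTop.2 ⟨m, main m⟩)
      _ = c m := htend.limsup_eq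
  -- identify the limsup set
  have hset : limsup A atTop = ⋂ m, ⋃ k ∈ Set.Ici m, A k := by
    rw [limsup_eq_iInf_iSup_of_nat]
    simp only [Set.iInf_eq_iInter, Set.iSup_eq_iUnion, Set.mem_Ici]
  have hanti : Antitone (fun m => ⋃ k ∈ Set.Ici m, A k) := by
    intro i j hij
    exact Set.biUnion_subset_biUnion_left (Set.Ici_subset_Ici.2 hij)
  have hmeas : μ (limsup A atTop) = ⨅ m, c m := by
    rw [hset]
    refine Antitone.measure_iInter ?_
      (fun m => (MeasurableSet.biUnion (Set.to_countable _)
        (fun k _ => hA k)).nullMeasurableSet) ⟨0, measure_ne_top μ _⟩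
    exact hanti
  rw [hmeas]
  exact le_iInf hLc
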